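/- Let A be a C*-algebra and let A₀ be a dense subalgebra of A (a subalgebra whose closure in the norm topology is A). Let p ∈ A₀ be a projection (p² = p = p*). If p is an infinite idempotent in A₀ — that is, there exist an idempotent e ∈ A₀ and s, t ∈ A₀ with s·t = p, t·s = e, e·p = p·e = e, and e ≠ p — then p is an infinite projection in A: there exist a projection q ∈ A (q² = q = q*) and v ∈ A with v*·v = p, v·v* = q, p·q = q·p = q, and q ≠ p. -/

import Mathlib

open Polynomial in
private lemma commute_cfcHom_aux {B : Type*} [CStarAlgebra B] {a b : B}
    (ha : IsSelfAdjoint a) (hb : Commute b a) (g : C(spectrum ℝ a, ℝ)) :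
    Commute b (cfcHom ha (R := ℝ) g) := by
  let S : Subalgebra ℝ C(spectrum ℝ a, ℝ) :=
    (Subalgebra.centralizer ℝ {b}).comap
      ((cfcHom ha (R := ℝ) : C(spectrum ℝ a, ℝ) →⋆ₐ[ℝ] B) : C(spectrum ℝ a, ℝ) →ₐ[ℝ] B)
  have hclosed : IsClosed (S : Set C(spectrum ℝ a, ℝ)) := by
    have heq : (S : Set C(spectrum ℝ a, ℝ)) =
        (cfcHom ha (R := ℝ)) ⁻¹' {x : B | b * x = x * b} := by
      ext f
      simp only [S, SetLike.mem_coe, Subalgebra.mem_comap, Subalgebra.mem_centralizer_iff,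
        Set.mem_singleton_iff, Set.mem_preimage, Set.mem_setOf_eq, forall_eq]
      rfl
    rw [heq]
    exact ((isClosed_eq (continuous_mul_left b) (continuous_mul_right b)).preimage
      (cfcHom_continuous ha))
  have hX : polynomialFunctions (spectrum ℝ a) ≤ S := by
    rw [polynomialFunctions.eq_adjoin_X]
    apply Algebra.adjoin_le
    rintro f hf
    rw [Set.mem_singleton_iff] at hf
    subst hf
    have hid : (Polynomial.toContinuousMapOnAlgHom (spectrum ℝ a)) X =
        (ContinuousMap.id ℝ).restrict (spectrum ℝ a) := by
      ext x; simp
    show _ ∈ S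
    rw [Subalgebra.mem_comap]
    rw [Subalgebra.mem_centralizer_iff]
    rintro y hy
    rw [Set.mem_singleton_iff] at hy
    subst hy
    have hca : ((cfcHom ha (R := ℝ) : C(spectrum ℝ a, ℝ) →⋆ₐ[ℝ] B) :
        C(spectrum ℝ a, ℝ) →ₐ[ℝ] B) ((Polynomial.toContinuousMapOnAlgHom (spectrum ℝ a)) X)
        = a := by
      show cfcHom ha (R := ℝ) _ = a
      rw [hid]
      exact cfcHom_id ha
    show _ * _ = _ * _
    rw [hca]
    exact hb
  have htop := polynomialFunctions.topologicalClosure (spectrum ℝ a)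
  have hle : (⊤ : Subalgebra ℝ C(spectrum ℝ a, ℝ)) ≤ S :=
    htop ▸ Subalgebra.topologicalClosure_minimal hX hclosed
  have hg : g ∈ S := hle (by trivial)
  rw [Subalgebra.mem_comap, Subalgebra.mem_centralizer_iff] at hg
  exact (hg b rfl)

private lemma commute_cfc_aux {B : Type*} [CStarAlgebra B] {a b : B}
    (hb : Commute b a) (f : ℝ → ℝ) : Commute b (cfc f a) := by
  by_cases h : IsSelfAdjoint a ∧ ContinuousOn f (spectrum ℝ a)
  · rw [cfc_apply f a h.1 h.2]
    exact commute_cfcHom_aux h.1 hb _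
  · rw [cfc_apply_of_not_and a h]
    exact Commute.zero_right b

private lemma key_lemma {B : Type*} [CStarAlgebra B] [PartialOrder B] [StarOrderedRing B]
    (P E S T : B)
    (hP : P * P = P) (hPsa : star P = P) (hE : E * E = E)
    (hST : S * T = P) (hTS : T * S = E) (hEP : E * P = E) (hPE : P * E = E)
    (hne : E ≠ P) :
    ∃ Q V : B, Q * Q = Q ∧ star Q = Q ∧ star V * V = P ∧ V * star V = Q ∧
      P * Q = Q ∧ Q * P = Q ∧ Q ≠ P ∧ V * P = V := by
  have hE' : star E * star E = star E := by rw [← star_mul, hE]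
  have hEsP : star E * P = star E := by
    have h := congrArg star hPE
    rwa [star_mul, hPsa] at h
  have hPEs : P * star E = star E := by
    have h := congrArg star hEP
    rwa [star_mul, hPsa] at h
  have hEE : ∀ w : B, E * (E * w) = E * w := fun w => by rw [← mul_assoc, hE]
  have hxx : ∀ w : B, star E * (star E * w) = star E * w := fun w => by rw [← mul_assoc, hE']
  have hPEw : ∀ w : B, P * (E * w) = E * w := fun w => by rw [← mul_assoc, hPE]
  have hPxw : ∀ w : B, P * (star E * w) = star E * w := fun w => by rw [← mul_assoc, hPEs]
  have hxPw : ∀ w : B, star E * (P * w) = star E * w := fun w => by rw [← mul_assoc, hEsP]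
  have hPPw : ∀ w : B, P * (P * w) = P * w := fun w => by rw [← mul_assoc, hP]
  -- the invertible element z
  set z : B := 1 + star (E - star E) * (E - star E) with hzdef
  have hzexp : z = 1 + (star E * E - star E - E + E * star E) := by
    rw [hzdef]
    congr 1
    have h1 : star (E - star E) * (E - star E)
        = star E * E - star E * star E - E * E + E * star E := by
      simp only [star_sub, star_star]
      noncomm_ring
    rw [h1, hE, hE']
  have hzsa : star z = z := by
    rw [hzdef]
    simp only [star_add, star_one, star_mul, star_star, star_sub]
  have hzu : IsUnit z := by
    rw [hzdef]
    refine CStarAlgebra.isUnit_of_le 1 ?_ ?_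
    · exact le_add_of_nonneg_right (star_mul_self_nonneg _)
    · exact isStrictlyPositive_one
  obtain ⟨u, hu⟩ := hzu
  set zi : B := ↑u⁻¹ with hzidef
  have hzzi : z * zi = 1 := by rw [← hu]; exact u.mul_inv
  have hziz : zi * z = 1 := by rw [← hu]; exact u.inv_mul
  have hzisa : star zi = zi := by
    have h1 : z * star zi = 1 := by
      have h2 := congrArg star hziz
      rwa [star_mul, hzsa, star_one] at h2
    calc star zi = (zi * z) * star zi := by rw [hziz, one_mul]
      _ = zi * (z * star zi) := by rw [mul_assoc]
      _ = zi := by rw [h1, mul_one]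
  -- z commutes with E, star E, P
  have hzE : z * E = E * (star E * E) := by
    rw [hzexp]
    simp only [add_mul, sub_mul, one_mul, mul_assoc, hE]
    abel
  have hEz : E * z = E * (star E * E) := by
    rw [hzexp]
    simp only [mul_add, mul_sub, mul_one, mul_assoc, hE, hEE]
    abel
  have hzx : z * star E = star E * (E * star E) := by
    rw [hzexp]
    simp only [add_mul, sub_mul, one_mul, mul_assoc, hE', hxx]
    abel
  have hxz : star E * z = star E * (E * star E) := by
    rw [hzexp]
    simp only [mul_add, mul_sub, mul_one, mul_assoc, hE', hxx]
    abel
  have hzP : z * P = P * z := by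
    rw [hzexp]
    simp only [add_mul, mul_add, sub_mul, mul_sub, one_mul, mul_one, mul_assoc,
      hEP, hEsP, hPE, hPEs, hPEw, hPxw]
  have hcomm : ∀ w : B, z * w = w * z → zi * w = w * zi := by
    intro w hw
    calc zi * w = zi * w * (z * zi) := by rw [hzzi, mul_one]
      _ = zi * ((w * z) * zi) := by simp only [mul_assoc]
      _ = zi * ((z * w) * zi) := by rw [← hw]
      _ = ((zi * z) * w) * zi := by simp only [mul_assoc]
      _ = w * zi := by rw [hziz, one_mul]
  have hziE : zi * E = E * zi := hcomm E (hzE.trans hEz.symm)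
  have hzix : zi * star E = star E * zi := hcomm _ (hzx.trans hxz.symm)
  have hziP : zi * P = P * zi := hcomm P hzP
  -- the projection Q
  set Q : B := E * (star E * zi) with hQdef
  have hQE : Q * E = E := by
    have h1 : Q * E = E * (star E * E) * zi := by
      rw [hQdef]
      simp only [mul_assoc, hziE]
    rw [h1, ← hEz, mul_assoc, hzzi, mul_one]
  have hEQ : E * Q = Q := by rw [hQdef, hEE]
  have hQQ : Q * Q = Q := by
    nth_rewrite 2 [hQdef]
    rw [← mul_assoc, hQE]
  have hQP : Q * P = Q := by
    rw [hQdef]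
    simp only [mul_assoc, hziP, hxPw]
  have hPQ : P * Q = Q := by rw [hQdef, hPEw]
  have hQsa : star Q = Q := by
    rw [hQdef]
    simp only [star_mul, star_star, hzisa]
    rw [hziE, mul_assoc, hzix]
  have hQnP : Q ≠ P := fun h => hne (hEP.symm.trans (h ▸ hEQ))
  -- the algebraic equivalence between P and Q
  set Xp : B := P * (S * Q) with hXpdef
  set Yp : B := E * (T * P) with hYpdef
  have hXY : (S * Q) * (E * T) = P := by
    calc (S * Q) * (E * T) = S * ((Q * E) * T) := by simp only [mul_assoc]
      _ = S * (E * T) := by rw [hQE]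
      _ = S * ((T * S) * T) := by rw [← hTS]
      _ = (S * T) * (S * T) := by simp only [mul_assoc]
      _ = P := by rw [hST, hP]
  have hYX : (E * T) * (S * Q) = Q := by
    calc (E * T) * (S * Q) = E * ((T * S) * Q) := by simp only [mul_assoc]
      _ = E * (E * Q) := by rw [hTS]
      _ = E * Q := hEE Q
      _ = Q := hEQ
  have hPXp : P * Xp = Xp := by rw [hXpdef, hPPw]
  have hXpQ : Xp * Q = Xp := by
    rw [hXpdef]
    simp only [mul_assoc, hQQ]
  have hYpP : Yp * P = Yp := by
    rw [hYpdef]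
    simp only [mul_assoc, hP]
  have hQYp : Q * Yp = Yp := by
    rw [hYpdef, ← mul_assoc, hQE]
  have hXpYp : Xp * Yp = P := by
    have h1 : (S * Q) * (E * (T * P)) = P := by
      have h2 : (S * Q) * (E * (T * P)) = ((S * Q) * (E * T)) * P := by
        simp only [mul_assoc]
      rw [h2, hXY, hP]
    rw [hXpdef, hYpdef, mul_assoc, h1, hP]
  have hYpXp : Yp * Xp = Q := by
    have h1 : Yp * Xp = (E * T) * (P * (S * Q)) := by
      rw [hYpdef, hXpdef]
      simp only [mul_assoc, hPPw]
    rw [h1, ← hXY]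
    have h2 : (E * T) * (((S * Q) * (E * T)) * (S * Q))
        = ((E * T) * (S * Q)) * ((E * T) * (S * Q)) := by
      simp only [mul_assoc]
    rw [h2, hYX, hQQ]
  -- the positive elements d and k, inverse to each other in the corner QBQ
  set d : B := star Xp * Xp with hddef
  set k : B := Yp * star Yp with hkdef
  have hsXpP : star Xp * P = star Xp := by
    have h := congrArg star hPXp
    rwa [star_mul, hPsa] at h
  have hQsXp : Q * star Xp = star Xp := by
    have h := congrArg star hXpQ
    rwa [star_mul, hQsa] at h
  have hsYpQ : star Yp * Q = star Yp := by
    have h := congrArg star hQYp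
    rwa [star_mul, hQsa] at h
  have hdk : d * k = Q := by
    calc d * k = star Xp * (Xp * Yp) * star Yp := by
          rw [hddef, hkdef]; simp only [mul_assoc]
      _ = star Xp * P * star Yp := by rw [hXpYp]
      _ = star Xp * star Yp := by rw [hsXpP]
      _ = star (Yp * Xp) := (star_mul _ _).symm
      _ = Q := by rw [hYpXp, hQsa]
  have hkd : k * d = Q := by
    calc k * d = Yp * (star Yp * star Xp) * Xp := by
          rw [hkdef, hddef]; simp only [mul_assoc]
      _ = Yp * star (Xp * Yp) * Xp := by rw [← star_mul]
      _ = Yp * P * Xp := by rw [hXpYp, hPsa]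
      _ = Yp * Xp := by rw [hYpP]
      _ = Q := hYpXp
  have hkQ : k * Q = k := by rw [hkdef, mul_assoc, hsYpQ]
  have hksa : star k = k := by rw [hkdef, star_mul, star_star]
  have hdsa : IsSelfAdjoint d := by rw [hddef]; exact IsSelfAdjoint.star_mul_self Xp
  have hd0 : (0 : B) ≤ d := by rw [hddef]; exact star_mul_self_nonneg Xp
  -- the square root of d
  set c : B := cfc Real.sqrt d with hcdef
  have hcsa : star c = c := by
    rw [hcdef]
    exact (cfc_predicate Real.sqrt d).star_eq
  have hcc : c * c = d := by
    rw [hcdef, ← cfc_mul Real.sqrt Real.sqrt d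
      Real.continuous_sqrt.continuousOn Real.continuous_sqrt.continuousOn]
    have h1 : cfc (fun x => Real.sqrt x * Real.sqrt x) d = cfc (fun x : ℝ => x) d := by
      apply cfc_congr
      intro x hx
      exact Real.mul_self_sqrt (spectrum_nonneg_of_nonneg hd0 hx)
    rw [h1, cfc_id' ℝ d]
  have hkc : k * c = c * k := by
    rw [hcdef]
    exact commute_cfc_aux (hkd.trans hdk.symm) Real.sqrt
  have hdc : d * c = c * d := by
    rw [hcdef]
    exact commute_cfc_aux (Commute.refl d) Real.sqrt
  -- the partial isometry
  set m : B := k * c with hmdef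
  have hmm : m * m = k := by
    calc m * m = k * (c * k) * c := by rw [hmdef]; simp only [mul_assoc]
      _ = k * (k * c) * c := by rw [← hkc]
      _ = k * k * (c * c) := by simp only [mul_assoc]
      _ = k * k * d := by rw [hcc]
      _ = k * (k * d) := by rw [mul_assoc]
      _ = k * Q := by rw [hkd]
      _ = k := hkQ
  have hmsa : star m = m := by
    rw [hmdef, star_mul, hcsa, hksa]
    exact hkc.symm
  set V : B := m * star Xp with hVdef
  have hVP : V * P = V := by rw [hVdef, mul_assoc, hsXpP]
  have hsV : star V = Xp * m := by rw [hVdef, star_mul, star_star, hmsa]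
  have hsVV : star V * V = P := by
    calc star V * V = Xp * (m * m) * star Xp := by
          rw [hsV, hVdef]; simp only [mul_assoc]
      _ = Xp * k * star Xp := by rw [hmm]
      _ = Xp * (Yp * star Yp) * star Xp := by rw [hkdef]
      _ = (Xp * Yp) * (star Yp * star Xp) := by simp only [mul_assoc]
      _ = (Xp * Yp) * star (Xp * Yp) := by rw [← star_mul]
      _ = P * star P := by rw [hXpYp]
      _ = P := by rw [hPsa, hP]
  have hcd_w : ∀ w, c * (d * w) = d * (c * w) := fun w => by
    rw [← mul_assoc, ← hdc, mul_assoc]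
  have hck_w : ∀ w, c * (k * w) = k * (c * w) := fun w => by
    rw [← mul_assoc, ← hkc, mul_assoc]
  have hkd_w : ∀ w, k * (d * w) = Q * w := fun w => by rw [← mul_assoc, hkd]
  have hVVs : V * star V = Q := by
    calc V * star V = m * (star Xp * Xp) * m := by
          rw [hVdef, hsV]; simp only [mul_assoc]
      _ = m * d * m := by rw [← hddef]
      _ = k * (c * (d * (k * c))) := by rw [hmdef]; simp only [mul_assoc]
      _ = Q := by rw [hcd_w, hck_w, hcc, hkd_w, hkd, hQQ]
  exact ⟨Q, V, hQQ, hQsa, hsVV, hVVs, hPQ, hQP, hQnP, hVP⟩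

/-- Lemma 2.4: let `A` be a C*-algebra and `A₀` a dense subalgebra.  If a projection
`p ∈ A₀` is an infinite idempotent in `A₀` (there are an idempotent `e ∈ A₀` and
`s, t ∈ A₀` with `s * t = p`, `t * s = e`, `e * p = p * e = e` and `e ≠ p`), then `p` is
an infinite projection in `A`: there are a projection `q ∈ A` and `v ∈ A` with
`v* * v = p`, `v * v* = q`, `p * q = q * p = q` and `q ≠ p`. -/
theorem infinite_projection_of_infinite_idempotent
    {A : Type*} [NonUnitalCStarAlgebra A]
    (A₀ : NonUnitalSubalgebra ℂ A) (hdense : Dense (A₀ : Set A))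
    (p : A) (hpA₀ : p ∈ A₀) (hidem : p * p = p) (hsa : star p = p)
    (hinf : ∃ e s t : A, e ∈ A₀ ∧ s ∈ A₀ ∧ t ∈ A₀ ∧ e * e = e ∧
      s * t = p ∧ t * s = e ∧ e * p = e ∧ p * e = e ∧ e ≠ p) :
    ∃ q v : A, q * q = q ∧ star q = q ∧ star v * v = p ∧ v * star v = q ∧
      p * q = q ∧ q * p = q ∧ q ≠ p := by
  obtain ⟨e, s, t, -, -, -, he, hst, hts, hep, hpe, hnep⟩ := hinf
  letI : PartialOrder (Unitization ℂ A) := CStarAlgebra.spectralOrder _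
  letI : StarOrderedRing (Unitization ℂ A) := CStarAlgebra.spectralOrderedRing _
  have hPP : (p : Unitization ℂ A) * (p : Unitization ℂ A) = p := by
    rw [← Unitization.inr_mul, hidem]
  have hPsa : star (p : Unitization ℂ A) = p := by rw [← Unitization.inr_star, hsa]
  have hEe : (e : Unitization ℂ A) * e = e := by rw [← Unitization.inr_mul, he]
  have hST : (s : Unitization ℂ A) * t = p := by rw [← Unitization.inr_mul, hst]
  have hTS : (t : Unitization ℂ A) * s = e := by rw [← Unitization.inr_mul, hts]
  have hEP : (e : Unitization ℂ A) * p = e := by rw [← Unitization.inr_mul, hep]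
  have hPE : (p : Unitization ℂ A) * e = e := by rw [← Unitization.inr_mul, hpe]
  have hnEP : (e : Unitization ℂ A) ≠ p := fun hh => hnep (Unitization.inr_injective hh)
  obtain ⟨Q, V, hQQ, hQsa, hsVV, hVVs, hPQ, hQP, hQnP, hVP⟩ :=
    key_lemma (p : Unitization ℂ A) e s t hPP hPsa hEe hST hTS hEP hPE hnEP
  have hfstP : (p : Unitization ℂ A).fst = 0 := Unitization.fst_inr ℂ p
  have hfstQ : Q.fst = 0 := by
    have h1 := congrArg (fun x : Unitization ℂ A => x.fst) hQP
    rw [Unitization.fst_mul, hfstP, mul_zero] at h1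
    exact h1.symm
  have hfstV : V.fst = 0 := by
    have h1 := congrArg (fun x : Unitization ℂ A => x.fst) hVP
    rw [Unitization.fst_mul, hfstP, mul_zero] at h1
    exact h1.symm
  have hQeq : Q = (Q.snd : Unitization ℂ A) := by
    apply Unitization.ext
    · rw [hfstQ, Unitization.fst_inr]
    · rw [Unitization.snd_inr]
  have hVeq : V = (V.snd : Unitization ℂ A) := by
    apply Unitization.ext
    · rw [hfstV, Unitization.fst_inr]
    · rw [Unitization.snd_inr]
  refine ⟨Q.snd, V.snd, ?_, ?_, ?_, ?_, ?_, ?_, ?_⟩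
  · apply Unitization.inr_injective (R := ℂ)
    rw [Unitization.inr_mul, ← hQeq]
    exact hQQ
  · apply Unitization.inr_injective (R := ℂ)
    rw [Unitization.inr_star, ← hQeq]
    exact hQsa
  · apply Unitization.inr_injective (R := ℂ)
    rw [Unitization.inr_mul, Unitization.inr_star, ← hVeq]
    exact hsVV
  · apply Unitization.inr_injective (R := ℂ)
    rw [Unitization.inr_mul, Unitization.inr_star, ← hVeq, ← hQeq]
    exact hVVs
  · apply Unitization.inr_injective (R := ℂ)
    rw [Unitization.inr_mul, ← hQeq]
    exact hPQ
  · apply Unitization.inr_injective (R := ℂ)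
    rw [Unitization.inr_mul, ← hQeq]
    exact hQP
  · intro hqp
    exact hQnP (by rw [hQeq, hqp])
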